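/- (Lemma 3.2) The set of vectors (x1, x2, x3, X11, X22, X33, X12, X13, X23) ∈ ℝ⁹ such that (x, X) ∈ QPB₃ and 4·x1 + 4·X11 − 8·X12 − 4·X13 + X22 + 3·X23 = 0 has affine dimension exactly 4; that is, the direction of the affine span of this set is a linear subspace of ℝ⁹ of dimension 4. -/

import Mathlib

/-- The unit box in ℝ³. -/
def Box3 : Set (Fin 3 → ℝ) := {x | ∀ i, 0 ≤ x i ∧ x i ≤ 1}

/-- `QPB₃`: the convex hull of the rank-one lifted points of the unit box, in the space of
pairs `(x, X)` where `X` is a `3 × 3` real matrix. -/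
noncomputable def QPB3 : Set ((Fin 3 → ℝ) × Matrix (Fin 3) (Fin 3) ℝ) :=
  convexHull ℝ {p | ∃ x ∈ Box3, p = (x, Matrix.of fun i j => x i * x j)}

/-- The points of `QPB₃`, viewed as vectors
`(x1, x2, x3, X11, X22, X33, X12, X13, X23) ∈ ℝ⁹`, on which the constraint
`4·x1 + 4·X11 − 8·X12 − 4·X13 + X22 + 3·X23 ≥ 0` is tight. -/
noncomputable def tightFace : Set (Fin 9 → ℝ) :=
  {v | ∃ p ∈ QPB3,
    v = ![p.1 0, p.1 1, p.1 2, p.2 0 0, p.2 1 1, p.2 2 2, p.2 0 1, p.2 0 2, p.2 1 2] ∧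
    4 * p.1 0 + 4 * p.2 0 0 - 8 * p.2 0 1 - 4 * p.2 0 2 + p.2 1 1 + 3 * p.2 1 2 = 0}

section VecEval
variable {α : Type*}
@[simp] lemma vec3_2 (a b c : α) : ![a,b,c] (2 : Fin 3) = c := rfl
@[simp] lemma vec4_2 (a b c d : α) : ![a,b,c,d] (2 : Fin 4) = c := rfl
@[simp] lemma vec4_3 (a b c d : α) : ![a,b,c,d] (3 : Fin 4) = d := rfl
@[simp] lemma vec9_2 (a b c d e f g h i : α) : ![a,b,c,d,e,f,g,h,i] (2 : Fin 9) = c := rfl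
@[simp] lemma vec9_3 (a b c d e f g h i : α) : ![a,b,c,d,e,f,g,h,i] (3 : Fin 9) = d := rfl
@[simp] lemma vec9_4 (a b c d e f g h i : α) : ![a,b,c,d,e,f,g,h,i] (4 : Fin 9) = e := rfl
@[simp] lemma vec9_5 (a b c d e f g h i : α) : ![a,b,c,d,e,f,g,h,i] (5 : Fin 9) = f := rfl
@[simp] lemma vec9_6 (a b c d e f g h i : α) : ![a,b,c,d,e,f,g,h,i] (6 : Fin 9) = g := rfl
@[simp] lemma vec9_7 (a b c d e f g h i : α) : ![a,b,c,d,e,f,g,h,i] (7 : Fin 9) = h := rfl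
@[simp] lemma vec9_8 (a b c d e f g h i : α) : ![a,b,c,d,e,f,g,h,i] (8 : Fin 9) = i := rfl
end VecEval

lemma f_nonneg (a b c : ℝ) (ha0 : 0 ≤ a) (_ha1 : a ≤ 1) (hb0 : 0 ≤ b) (hb1 : b ≤ 1)
    (hc0 : 0 ≤ c) (hc1 : c ≤ 1) :
    0 ≤ 4 * a + 4 * (a * a) - 8 * (a * b) - 4 * (a * c) + b * b + 3 * (b * c) := by
  rcases le_or_gt (4*a) (3*b) with h | h
  · nlinarith [sq_nonneg (2*a - b), mul_nonneg ha0 (by linarith : (0:ℝ) ≤ 1 - b),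
      mul_nonneg hc0 (by linarith : (0:ℝ) ≤ 3*b - 4*a)]
  · nlinarith [sq_nonneg (a - b), mul_nonneg hb0 (by linarith : (0:ℝ) ≤ 1 - b),
      mul_nonneg (by linarith : (0:ℝ) ≤ 1 - c) (by linarith : (0:ℝ) ≤ 4*a - 3*b)]

lemma f_zero_classify (a b c : ℝ) (ha0 : 0 ≤ a) (ha1 : a ≤ 1) (hb0 : 0 ≤ b) (hb1 : b ≤ 1)
    (hc0 : 0 ≤ c) (hc1 : c ≤ 1)
    (hf : 4 * a + 4 * (a * a) - 8 * (a * b) - 4 * (a * c) + b * b + 3 * (b * c) = 0) :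
    (a = 0 ∧ b = 0) ∨ (a = 1/2 ∧ b = 1 ∧ c = 0) ∨ (a = 1 ∧ b = 1 ∧ c = 1) := by
  have hb01 : b = 0 ∨ b = 1 := by
    by_contra hcon
    push_neg at hcon
    have hbpos : 0 < b := lt_of_le_of_ne hb0 (Ne.symm hcon.1)
    have hblt : b < 1 := lt_of_le_of_ne hb1 hcon.2
    rcases le_or_gt (4*a) (3*b) with h | h
    · have ha : a = 0 := by
        by_contra h0
        have hapos : 0 < a := lt_of_le_of_ne ha0 (Ne.symm h0)
        nlinarith [sq_nonneg (2*a - b), mul_nonneg hc0 (by linarith : (0:ℝ) ≤ 3*b - 4*a),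
          mul_pos hapos (by linarith : (0:ℝ) < 1 - b)]
      subst ha
      nlinarith [mul_pos hbpos hbpos, mul_nonneg hbpos.le hc0]
    · nlinarith [sq_nonneg (a - b), mul_pos hbpos (by linarith : (0:ℝ) < 1 - b),
        mul_nonneg (by linarith : (0:ℝ) ≤ 1 - c) (by linarith : (0:ℝ) ≤ 4*a - 3*b)]
  rcases hb01 with rfl | rfl
  · left
    refine ⟨?_, rfl⟩
    by_contra h0
    have hapos : 0 < a := lt_of_le_of_ne ha0 (Ne.symm h0)
    nlinarith [mul_pos hapos hapos, mul_nonneg hapos.le (by linarith : (0:ℝ) ≤ 1 - c)]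
  · right
    rcases le_or_gt a (3/4) with h | h
    · left
      have ha : a = 1/2 := by
        nlinarith [sq_nonneg (2*a - 1), mul_nonneg hc0 (by linarith : (0:ℝ) ≤ 3 - 4*a)]
      subst ha
      refine ⟨rfl, rfl, by nlinarith⟩
    · right
      have ha : a = 1 := by
        nlinarith [sq_nonneg (a - 1), sq_nonneg (2*a - 1),
          mul_nonneg (by linarith : (0:ℝ) ≤ 1 - c) (by linarith : (0:ℝ) ≤ 4*a - 3)]
      subst ha
      refine ⟨rfl, rfl, by nlinarith⟩

noncomputable def liftMap : ((Fin 3 → ℝ) × Matrix (Fin 3) (Fin 3) ℝ) →ₗ[ℝ] (Fin 9 → ℝ) where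
  toFun p := ![p.1 0, p.1 1, p.1 2, p.2 0 0, p.2 1 1, p.2 2 2, p.2 0 1, p.2 0 2, p.2 1 2]
  map_add' p q := by funext i; fin_cases i <;> rfl
  map_smul' r p := by funext i; fin_cases i <;> rfl

noncomputable def ellMap : ((Fin 3 → ℝ) × Matrix (Fin 3) (Fin 3) ℝ) →ₗ[ℝ] ℝ where
  toFun p := 4 * p.1 0 + 4 * p.2 0 0 - 8 * p.2 0 1 - 4 * p.2 0 2 + p.2 1 1 + 3 * p.2 1 2
  map_add' p q := by simp [Matrix.add_apply]; ring
  map_smul' r p := by simp [Matrix.smul_apply]; ring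

def e2v : Fin 9 → ℝ := ![0, 0, 1, 0, 0, 0, 0, 0, 0]
def e5v : Fin 9 → ℝ := ![0, 0, 0, 0, 0, 1, 0, 0, 0]
noncomputable def vav : Fin 9 → ℝ := ![1/2, 1, 0, 1/4, 1, 0, 1/2, 0, 0]
def vbv : Fin 9 → ℝ := ![1, 1, 1, 1, 1, 1, 1, 1, 1]

noncomputable def Wspan : Submodule ℝ (Fin 9 → ℝ) :=
  Submodule.span ℝ (Set.range ![e2v, e5v, vav, vbv])

lemma e2v_mem : e2v ∈ Wspan := Submodule.subset_span ⟨0, rfl⟩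
lemma e5v_mem : e5v ∈ Wspan := Submodule.subset_span ⟨1, rfl⟩
lemma vav_mem : vav ∈ Wspan := Submodule.subset_span ⟨2, rfl⟩
lemma vbv_mem : vbv ∈ Wspan := Submodule.subset_span ⟨3, rfl⟩

lemma lift_mem_W (x : Fin 3 → ℝ) (hx : x ∈ Box3)
    (hf : 4 * x 0 + 4 * (x 0 * x 0) - 8 * (x 0 * x 1) - 4 * (x 0 * x 2) + x 1 * x 1
      + 3 * (x 1 * x 2) = 0) :
    liftMap (x, Matrix.of fun i j => x i * x j) ∈ Wspan := by
  rcases f_zero_classify (x 0) (x 1) (x 2) (hx 0).1 (hx 0).2 (hx 1).1 (hx 1).2 (hx 2).1 (hx 2).2 hf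
    with ⟨h0, h1⟩ | ⟨h0, h1, h2⟩ | ⟨h0, h1, h2⟩
  · have : liftMap (x, Matrix.of fun i j => x i * x j) = x 2 • e2v + (x 2 * x 2) • e5v := by
      funext i; fin_cases i <;> simp [liftMap, e2v, e5v, h0, h1]
    rw [this]
    exact Wspan.add_mem (Wspan.smul_mem _ e2v_mem) (Wspan.smul_mem _ e5v_mem)
  · have : liftMap (x, Matrix.of fun i j => x i * x j) = vav := by
      funext i; fin_cases i <;> simp [liftMap, vav, h0, h1, h2] <;> norm_num
    rw [this]; exact vav_mem
  · have : liftMap (x, Matrix.of fun i j => x i * x j) = vbv := by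
      funext i; fin_cases i <;> simp [liftMap, vbv, h0, h1, h2]
    rw [this]; exact vbv_mem

lemma tightFace_subset_W : tightFace ⊆ (Wspan : Set (Fin 9 → ℝ)) := by
  rintro v ⟨p, hp, rfl, hc⟩
  show liftMap p ∈ Wspan
  obtain ⟨ι, _inst, w, z, hw0, hw1, hz, hsum⟩ := mem_convexHull_iff_exists_fintype.mp hp
  have hznn : ∀ i, 0 ≤ ellMap (z i) := by
    intro i
    obtain ⟨x, hxB, hzi⟩ := hz i
    rw [hzi]
    exact f_nonneg (x 0) (x 1) (x 2) (hxB 0).1 (hxB 0).2 (hxB 1).1 (hxB 1).2 (hxB 2).1 (hxB 2).2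
  have hell : ∑ i, w i * ellMap (z i) = 0 := by
    have hc' : ellMap p = 0 := hc
    rw [← hc', ← hsum, map_sum]
    simp [smul_eq_mul]
  have hzero : ∀ i, w i * ellMap (z i) = 0 := by
    intro i
    have := (Finset.sum_eq_zero_iff_of_nonneg
      (fun i _ => mul_nonneg (hw0 i) (hznn i))).mp hell i (Finset.mem_univ i)
    exact this
  rw [← hsum, map_sum]
  refine Submodule.sum_mem _ fun i _ => ?_
  rw [map_smul]
  rcases eq_or_ne (w i) 0 with h | h
  · simp [h]
  · have hez : ellMap (z i) = 0 := by
      rcases mul_eq_zero.mp (hzero i) with h' | h'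
      · exact absurd h' h
      · exact h'
    obtain ⟨x, hxB, hzi⟩ := hz i
    rw [hzi] at hez ⊢
    exact Wspan.smul_mem _ (lift_mem_W x hxB hez)

lemma mem_tightFace_of (x : Fin 3 → ℝ) (hx : x ∈ Box3)
    (hf : 4 * x 0 + 4 * (x 0 * x 0) - 8 * (x 0 * x 1) - 4 * (x 0 * x 2) + x 1 * x 1
      + 3 * (x 1 * x 2) = 0) :
    liftMap (x, Matrix.of fun i j => x i * x j) ∈ tightFace :=
  ⟨(x, Matrix.of fun i j => x i * x j), subset_convexHull ℝ _ ⟨x, hx, rfl⟩, rfl, hf⟩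


/-- The face of `QPB₃` on which the constraint is tight has affine dimension exactly 4. -/
theorem tightFace_dim :
    Module.finrank ℝ (affineSpan ℝ tightFace).direction = 4 := by
  have box_mem : ∀ (a b c : ℝ), 0 ≤ a → a ≤ 1 → 0 ≤ b → b ≤ 1 → 0 ≤ c → c ≤ 1 →
      (![a, b, c] ∈ Box3) := by
    intro a b c h1 h2 h3 h4 h5 h6 i
    fin_cases i <;> simp_all
  -- five points of the face
  have hm0 : liftMap (![0,0,0], Matrix.of fun i j => ![(0:ℝ),0,0] i * ![(0:ℝ),0,0] j) ∈ tightFace :=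
    mem_tightFace_of _ (box_mem 0 0 0 le_rfl zero_le_one le_rfl zero_le_one le_rfl zero_le_one)
      (by norm_num)
  have hmA : liftMap (![0,0,1], Matrix.of fun i j => ![(0:ℝ),0,1] i * ![(0:ℝ),0,1] j) ∈ tightFace :=
    mem_tightFace_of _ (box_mem 0 0 1 le_rfl zero_le_one le_rfl zero_le_one zero_le_one le_rfl)
      (by norm_num)
  have hmB : liftMap (![0,0,1/2], Matrix.of fun i j => ![(0:ℝ),0,1/2] i * ![(0:ℝ),0,1/2] j)
      ∈ tightFace :=
    mem_tightFace_of _ (box_mem 0 0 (1/2) le_rfl zero_le_one le_rfl zero_le_one (by norm_num)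
      (by norm_num)) (by norm_num)
  have hmC : liftMap (![1/2,1,0], Matrix.of fun i j => ![(1:ℝ)/2,1,0] i * ![(1:ℝ)/2,1,0] j)
      ∈ tightFace :=
    mem_tightFace_of _ (box_mem (1/2) 1 0 (by norm_num) (by norm_num) zero_le_one le_rfl le_rfl
      zero_le_one) (by norm_num)
  have hmD : liftMap (![1,1,1], Matrix.of fun i j => ![(1:ℝ),1,1] i * ![(1:ℝ),1,1] j)
      ∈ tightFace :=
    mem_tightFace_of _ (box_mem 1 1 1 zero_le_one le_rfl zero_le_one le_rfl zero_le_one le_rfl)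
      (by norm_num)
  -- difference vectors
  set D := (affineSpan ℝ tightFace).direction with hD
  have hdiff : ∀ m m' : Fin 9 → ℝ, m ∈ tightFace → m' ∈ tightFace → m - m' ∈ D := by
    intro m m' hm hm'
    exact AffineSubspace.vsub_mem_direction (mem_affineSpan ℝ hm) (mem_affineSpan ℝ hm')
  set uA : Fin 9 → ℝ := ![0,0,1,0,0,1,0,0,0] with huA
  set uB : Fin 9 → ℝ := ![0,0,1/2,0,0,1/4,0,0,0] with huB
  have hdA : uA ∈ D := by
    have := hdiff _ _ hmA hm0
    convert this using 1
    funext i; fin_cases i <;> norm_num [liftMap, huA]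
  have hdB : uB ∈ D := by
    have := hdiff _ _ hmB hm0
    convert this using 1
    funext i; fin_cases i <;> norm_num [liftMap, huB]
  have hdC : vav ∈ D := by
    have := hdiff _ _ hmC hm0
    convert this using 1
    funext i; fin_cases i <;> norm_num [liftMap, vav]
  have hdD : vbv ∈ D := by
    have := hdiff _ _ hmD hm0
    convert this using 1
    funext i; fin_cases i <;> norm_num [liftMap, vbv]
  -- linear independence of the four difference vectors
  have hLI : LinearIndependent ℝ ![uA, uB, vav, vbv] := by
    rw [Fintype.linearIndependent_iff]
    intro g hg
    have h1 := congrFun hg 1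
    have h2 := congrFun hg 2
    have h5 := congrFun hg 5
    have h7 := congrFun hg 7
    simp [Fin.sum_univ_four, huA, huB, vav, vbv, Matrix.vecHead, Matrix.vecTail] at h1 h2 h5 h7
    intro i
    fin_cases i <;> simp <;> linarith
  -- lower bound
  have hle : Submodule.span ℝ (Set.range ![uA, uB, vav, vbv]) ≤ D := by
    rw [Submodule.span_le]
    rintro v ⟨i, rfl⟩
    fin_cases i
    · exact hdA
    · exact hdB
    · exact hdC
    · exact hdD
  have hlow : 4 ≤ Module.finrank ℝ D := by
    have := Submodule.finrank_mono hle
    rwa [finrank_span_eq_card hLI, Fintype.card_fin] at this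
  -- upper bound
  have hWle : D ≤ Wspan := by
    rw [hD, direction_affineSpan]
    rw [vectorSpan_def, Submodule.span_le]
    rintro v ⟨a, ha, b, hb, rfl⟩
    exact Wspan.sub_mem (tightFace_subset_W ha) (tightFace_subset_W hb)
  have hhigh : Module.finrank ℝ D ≤ 4 := by
    have h1 := Submodule.finrank_mono hWle
    have h2 : Module.finrank ℝ Wspan ≤ 4 := by
      have := finrank_range_le_card (R := ℝ) ![e2v, e5v, vav, vbv]
      simp only [Fintype.card_fin] at this; exact this
    omega
  omega
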